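/- arXiv:2510.05689 — 3 statements merged into one kernel-verified Lean document; each statement's English description precedes it below -/
import Mathlib

section
/- For every v ∈ (0, t) at which J is differentiable one has F′(v) ≥ J′(v) + α G(v); consequently, if v₀ ∈ (0, t) denotes the unique zero of G, then F′(v) > 0 for every v ∈ (v₀, t) at which J is differentiable. -/
open MeasureTheory Real Set

set_option maxHeartbeats 1600000 in
/-- For every `v ∈ (0, t)` at which `J` is differentiable,
`F' v ≥ J' v + α * G v`; consequently, if `v₀ ∈ (0, t)` is the unique zero of `G`,
then `F' v > 0` for every `v ∈ (v₀, t)` at which `J` is differentiable. -/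
theorem derivF_lower_bound_and_pos
    (T t α β : ℝ) (hT : 0 < T) (ht : 0 < t) (htT : t ≤ T)
    (hα : 0 < α) (hβ : 0 < β)
    (J : ℝ → ℝ) (hJcont : Continuous J)
    (hJmono : StrictMonoOn J (Set.Icc 0 T)) (hJ0 : J 0 = 0)
    (G F : ℝ → ℝ)
    (hG : ∀ v, G v = (Real.exp (J v) - 1) - β * ∫ s in v..t, (Real.exp (J s) - 1))
    (hF : ∀ v, F v = J v - α * ∫ s in v..t, (Real.exp (J s) - 1) * Real.exp (-β * (s - v))) :
    (∀ v ∈ Set.Ioo 0 t, DifferentiableAt ℝ J v →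
        deriv J v + α * G v ≤ deriv F v) ∧
    (∀ v₀ ∈ Set.Ioo 0 t, G v₀ = 0 → (∀ w ∈ Set.Ioo 0 t, G w = 0 → w = v₀) →
        ∀ v ∈ Set.Ioo v₀ t, DifferentiableAt ℝ J v → 0 < deriv F v) := by
  have hJnonneg : ∀ s, 0 ≤ s → s ≤ T → 0 ≤ J s := by
    intro s hs0 hsT
    rcases eq_or_lt_of_le hs0 with h | h
    · simp [← h, hJ0]
    · have := hJmono (left_mem_Icc.2 hT.le) ⟨hs0, hsT⟩ h
      linarith [hJ0]
  have hJc : Continuous fun s => Real.exp (J s) - 1 :=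
    (Real.continuous_exp.comp hJcont).sub continuous_const
  set g : ℝ → ℝ := fun s => (Real.exp (J s) - 1) * Real.exp (-β * s) with hgdef
  have hgc : Continuous g :=
    hJc.mul (Real.continuous_exp.comp (continuous_const.mul continuous_id))
  -- rewrite F
  have hFalt : F = fun v => J v - α * (Real.exp (β * v) * ∫ s in v..t, g s) := by
    funext v
    rw [hF v]
    congr 1
    congr 1
    rw [← intervalIntegral.integral_const_mul]
    apply intervalIntegral.integral_congr
    intro s _
    simp only [hgdef]
    rw [show -β * (s - v) = β * v + -β * s by ring, Real.exp_add]
    ring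
  -- derivative of F
  have hderivF : ∀ v, DifferentiableAt ℝ J v →
      deriv F v = deriv J v + α * (Real.exp (J v) - 1)
        - α * β * (Real.exp (β * v) * ∫ s in v..t, g s) := by
    intro v hJd
    have hH : HasDerivAt (fun u => ∫ s in u..t, g s) (-(g v)) v :=
      intervalIntegral.integral_hasDerivAt_left (hgc.intervalIntegrable v t)
        (hgc.stronglyMeasurableAtFilter _ _) hgc.continuousAt
    have hexp : HasDerivAt (fun u => Real.exp (β * u)) (Real.exp (β * v) * β) v := by
      simpa using ((hasDerivAt_id v).const_mul β).exp
    have hprod := hexp.mul hH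
    have hFD : HasDerivAt F
        (deriv J v - α * (Real.exp (β * v) * β * (∫ s in v..t, g s)
          + Real.exp (β * v) * -(g v))) v := by
      rw [hFalt]
      exact hJd.hasDerivAt.sub (hprod.const_mul α)
    rw [hFD.deriv]
    have hgv : Real.exp (β * v) * g v = Real.exp (J v) - 1 := by
      simp only [hgdef]
      rw [show Real.exp (β * v) * ((Real.exp (J v) - 1) * Real.exp (-β * v))
            = (Real.exp (J v) - 1) * (Real.exp (-β * v + β * v)) by
        rw [Real.exp_add]; ring]
      norm_num
    nlinarith [hgv]
  -- key inequality
  have key : ∀ v ∈ Set.Ioo 0 t, DifferentiableAt ℝ J v →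
      deriv J v + α * G v ≤ deriv F v := by
    intro v hv hJd
    rw [hderivF v hJd, hG v]
    have hvt : v ≤ t := hv.2.le
    -- exp(βv) * ∫ g = ∫ (exp(J s)-1) * exp(-β(s-v))
    have h1 : Real.exp (β * v) * ∫ s in v..t, g s
        = ∫ s in v..t, (Real.exp (J s) - 1) * Real.exp (-β * (s - v)) := by
      rw [← intervalIntegral.integral_const_mul]
      apply intervalIntegral.integral_congr
      intro s _
      simp only [hgdef]
      rw [show -β * (s - v) = β * v + -β * s by ring, Real.exp_add]
      ring
    have h2 : (∫ s in v..t, (Real.exp (J s) - 1))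
        - (∫ s in v..t, (Real.exp (J s) - 1) * Real.exp (-β * (s - v)))
        = ∫ s in v..t, (Real.exp (J s) - 1) * (1 - Real.exp (-β * (s - v))) := by
      rw [← intervalIntegral.integral_sub (hJc.intervalIntegrable v t)
        ((show Continuous fun s : ℝ => (Real.exp (J s) - 1) * Real.exp (-β * (s - v)) from
          hJc.mul (by continuity : Continuous fun s : ℝ =>
          Real.exp (-β * (s - v)))).intervalIntegrable v t)]
      apply intervalIntegral.integral_congr
      intro s _
      ring
    have h3 : 0 ≤ ∫ s in v..t, (Real.exp (J s) - 1) * (1 - Real.exp (-β * (s - v))) := by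
      apply intervalIntegral.integral_nonneg hvt
      intro s hs
      have hs0 : 0 ≤ s := le_trans hv.1.le hs.1
      have hsT : s ≤ T := le_trans hs.2 htT
      have h4 : 1 ≤ Real.exp (J s) := Real.one_le_exp (hJnonneg s hs0 hsT)
      have h5 : Real.exp (-β * (s - v)) ≤ 1 := by
        rw [Real.exp_le_one_iff]
        nlinarith [hs.1]
      nlinarith
    have h4 : Real.exp (β * v) * (∫ s in v..t, g s) ≤ ∫ s in v..t, (Real.exp (J s) - 1) := by
      linarith
    nlinarith [mul_le_mul_of_nonneg_left h4 (mul_nonneg hα.le hβ.le)]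
  constructor
  · exact key
  · intro v₀ hv₀ hGv₀ huniq v hv hJd
    have hv0 : 0 < v := lt_trans hv₀.1 hv.1
    have hvIoo : v ∈ Set.Ioo 0 t := ⟨hv0, hv.2⟩
    -- G is continuous
    have hGcont : Continuous G := by
      have : G = fun v => (Real.exp (J v) - 1) - β * ∫ s in v..t, (Real.exp (J s) - 1) :=
        funext hG
      rw [this]
      apply ((Real.continuous_exp.comp hJcont).sub continuous_const).sub
      apply continuous_const.mul
      rw [continuous_iff_continuousAt]
      intro x
      exact (intervalIntegral.integral_hasDerivAt_left (hJc.intervalIntegrable x t)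
        (hJc.stronglyMeasurableAtFilter _ _) hJc.continuousAt).continuousAt
    have hGt : 0 < G t := by
      rw [hG t, intervalIntegral.integral_same]
      have h1 : J 0 < J t := hJmono (left_mem_Icc.2 hT.le) ⟨ht.le, htT⟩ ht
      have h2 : 0 < J t := by linarith [hJ0]
      have := Real.add_one_le_exp (J t)
      nlinarith
    -- G v > 0
    have hGv : 0 < G v := by
      by_contra hle
      push_neg at hle
      rcases eq_or_lt_of_le hle with heq | hlt
      · exact absurd (huniq v hvIoo heq) (ne_of_lt hv.1).symm
      · have hsub : Set.Ioo (G v) (G t) ⊆ G '' Set.Ioo v t :=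
          intermediate_value_Ioo hv.2.le hGcont.continuousOn
        have h0 : (0 : ℝ) ∈ Set.Ioo (G v) (G t) := ⟨hlt, hGt⟩
        obtain ⟨w, hw, hGw⟩ := hsub h0
        have hwIoo : w ∈ Set.Ioo 0 t := ⟨lt_trans hv0 hw.1, hw.2⟩
        have h6 : v₀ < w := lt_trans hv.1 hw.1
        exact absurd (huniq w hwIoo hGw) (ne_of_lt h6).symm
    -- deriv J v ≥ 0
    have hJd' : 0 ≤ deriv J v := by
      have hd := hJd.hasDerivAt
      rw [hasDerivAt_iff_tendsto_slope] at hd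
      have hev : ∀ᶠ u in nhdsWithin v {v}ᶜ, 0 ≤ slope J v u := by
        have hmem : Set.Ioo (0 : ℝ) T ∈ nhdsWithin v {v}ᶜ := by
          apply mem_nhdsWithin_of_mem_nhds
          exact isOpen_Ioo.mem_nhds ⟨hv0, lt_of_lt_of_le hv.2 htT⟩
        have hvm : v ∈ Set.Icc (0 : ℝ) T := ⟨hv0.le, (lt_of_lt_of_le hv.2 htT).le⟩
        filter_upwards [hmem, self_mem_nhdsWithin] with u hu hu'
        have hne : v ≠ u := fun h => hu' h.symm
        have hum : u ∈ Set.Icc (0 : ℝ) T := ⟨hu.1.le, hu.2.le⟩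
        rw [slope_def_field]
        rcases lt_or_gt_of_ne hne with h | h
        · have hlt : J v < J u := hJmono hvm hum h
          apply div_nonneg <;> linarith
        · have hlt : J u < J v := hJmono hum hvm h
          rw [div_nonneg_iff]
          right
          constructor <;> linarith
      exact ge_of_tendsto hd hev
    have := key v hvIoo hJd
    nlinarith
end

section
/- Assume in addition that J is differentiable on [0, t]. Let v₀ ∈ (0, t) be the unique zero of G. Then F is strictly increasing on the interval [v₀, t]. -/
open MeasureTheory Real Set

/-- If moreover `J` is differentiable on `[0, t]` and `v₀ ∈ (0, t)` is the
unique zero of `G`, then `F` is strictly increasing on `[v₀, t]`. -/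
theorem F_strictMonoOn_of_G_zero
    (T t α β : ℝ) (hT : 0 < T) (ht : 0 < t) (htT : t ≤ T)
    (hα : 0 < α) (hβ : 0 < β)
    (J : ℝ → ℝ) (hJcont : Continuous J)
    (hJmono : StrictMonoOn J (Set.Icc 0 T)) (hJ0 : J 0 = 0)
    (hJdiff : DifferentiableOn ℝ J (Set.Icc 0 t))
    (G F : ℝ → ℝ)
    (hG : ∀ v, G v = (Real.exp (J v) - 1) - β * ∫ s in v..t, (Real.exp (J s) - 1))
    (hF : ∀ v, F v = J v - α * ∫ s in v..t, (Real.exp (J s) - 1) * Real.exp (-β * (s - v)))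
    (v₀ : ℝ) (hv₀ : v₀ ∈ Set.Ioo 0 t) (hGv₀ : G v₀ = 0)
    (hv₀uniq : ∀ w ∈ Set.Ioo 0 t, G w = 0 → w = v₀) :
    StrictMonoOn F (Set.Icc v₀ t) := by
  obtain ⟨hv₀0, hv₀t⟩ := hv₀
  -- J is nonneg on [0, T]
  have hJnn : ∀ s, 0 ≤ s → s ≤ T → 0 ≤ J s := by
    intro s hs hsT
    rcases eq_or_lt_of_le hs with h | h
    · rw [← h, hJ0]
    · have := hJmono (by constructor <;> linarith) ⟨hs, hsT⟩ h
      linarith [hJ0]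
  have hJpos : ∀ s, 0 < s → s ≤ T → 0 < J s := by
    intro s hs hsT
    have := hJmono (by constructor <;> linarith) ⟨hs.le, hsT⟩ hs
    linarith [hJ0]
  -- auxiliary functions
  set g : ℝ → ℝ := fun s => Real.exp (J s) - 1 with hg
  have hgcont : Continuous g := (Real.continuous_exp.comp hJcont).sub continuous_const
  set h : ℝ → ℝ := fun s => g s * Real.exp (-β * s) with hh
  have hhcont : Continuous h := hgcont.mul (Real.continuous_exp.comp (continuous_const.mul continuous_id))
  set Φ : ℝ → ℝ := fun v => ∫ s in v..t, h s with hΦdef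
  set Ψ : ℝ → ℝ := fun v => ∫ s in v..t, g s with hΨdef
  have hΦ : ∀ v, HasDerivAt Φ (-h v) v := fun v =>
    intervalIntegral.integral_hasDerivAt_left (hhcont.intervalIntegrable v t)
      (hhcont.stronglyMeasurableAtFilter _ _) hhcont.continuousAt
  have hΨ : ∀ v, HasDerivAt Ψ (-g v) v := fun v =>
    intervalIntegral.integral_hasDerivAt_left (hgcont.intervalIntegrable v t)
      (hgcont.stronglyMeasurableAtFilter _ _) hgcont.continuousAt
  have hGcont : Continuous G := by
    have : Continuous fun v => g v - β * Ψ v := by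
      exact (hgcont).sub (continuous_const.mul
        (continuous_iff_continuousAt.2 fun v => (hΨ v).continuousAt))
    have hGeq : G = fun v => g v - β * Ψ v := by funext v; rw [hG v]
    rw [hGeq]; exact this
  -- G t > 0
  have hGt : 0 < G t := by
    rw [hG t, intervalIntegral.integral_same]
    have := hJpos t ht htT
    simp only [mul_zero, sub_zero]
    have : 1 < Real.exp (J t) := by
      rw [Real.one_lt_exp_iff]; exact hJpos t ht htT
    linarith
  -- G ≥ 0 on [v₀, t]
  have hGpos : ∀ v, v₀ ≤ v → v ≤ t → 0 ≤ G v := by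
    intro v hv1 hv2
    by_contra hneg
    push_neg at hneg
    have hvt : v ≤ t := hv2
    have : (0:ℝ) ∈ Set.Icc (G v) (G t) := ⟨hneg.le, hGt.le⟩
    obtain ⟨z, hz, hGz⟩ := intermediate_value_Icc hvt hGcont.continuousOn this
    have hzv₀ : z = v₀ := by
      apply hv₀uniq z ⟨by linarith [hz.1], ?_⟩ hGz
      rcases eq_or_lt_of_le hz.2 with h | h
      · exact absurd (h ▸ hGz) (by linarith)
      · exact h
    have hvne : v ≠ v₀ := by
      intro h; rw [h, hGv₀] at hneg; linarith
    have : v₀ < v := lt_of_le_of_ne hv1 (Ne.symm hvne)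
    linarith [hz.1]
  -- rewrite F
  have hFeq : ∀ v, F v = J v - α * (Real.exp (β * v) * Φ v) := by
    intro v
    rw [hF v]
    have hcongr : (∫ s in v..t, (Real.exp (J s) - 1) * Real.exp (-β * (s - v)))
        = ∫ s in v..t, Real.exp (β * v) * h s := by
      apply intervalIntegral.integral_congr
      intro s _
      simp only [hh, hg]
      rw [show Real.exp (-β * (s - v)) = Real.exp (β * v) * Real.exp (-β * s) by
        rw [← Real.exp_add]; ring_nf]
      ring
    rw [hcongr, intervalIntegral.integral_const_mul]
  set K : ℝ → ℝ := fun v => -(α * (Real.exp (β * v) * Φ v)) with hKdef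
  -- derivative of K
  have hK' : ∀ v, HasDerivAt K (α * (g v - β * (Real.exp (β * v) * Φ v))) v := by
    intro v
    have h1 : HasDerivAt (fun v => Real.exp (β * v)) (β * Real.exp (β * v)) v := by
      have := (Real.hasDerivAt_exp (β * v)).comp v ((hasDerivAt_id v).const_mul β)
      simpa [mul_comm, Function.comp_def] using this
    have h2 := (h1.mul (hΦ v)).const_mul α
    have h3 := h2.neg
    refine h3.congr_deriv ?_
    have hexp : Real.exp (β * v) * Real.exp (-β * v) = 1 := by
      rw [← Real.exp_add]; ring_nf; exact Real.exp_zero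
    simp only [hh]
    linear_combination (α * g v) * hexp
  -- deriv K nonneg on interior
  have hKmono : MonotoneOn K (Set.Icc v₀ t) := by
    apply monotoneOn_of_deriv_nonneg (convex_Icc v₀ t)
    · exact Continuous.continuousOn (continuous_iff_continuousAt.2 fun v => (hK' v).continuousAt)
    · intro v hv
      exact ((hK' v).differentiableAt).differentiableWithinAt
    · intro v hv
      rw [interior_Icc] at hv
      rw [(hK' v).deriv]
      have hvpos : 0 < v := lt_trans hv₀0 hv.1
      -- e^{βv} Φ v ≤ Ψ v
      have hle : Real.exp (β * v) * Φ v ≤ Ψ v := by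
        rw [hΦdef, hΨdef, ← intervalIntegral.integral_const_mul]
        apply intervalIntegral.integral_mono_on hv.2.le
        · exact (continuous_const.mul hhcont).intervalIntegrable v t
        · exact hgcont.intervalIntegrable v t
        · intro s hs
          simp only [hh]
          have hgs : 0 ≤ g s := by
            simp only [hg]
            have := hJnn s (by linarith [hs.1]) (by linarith [hs.2])
            have := Real.one_le_exp this
            linarith
          have hexple : Real.exp (β * v) * Real.exp (-β * s) ≤ 1 := by
            rw [← Real.exp_add]
            apply Real.exp_le_one_iff.2
            nlinarith [hs.1]
          calc Real.exp (β * v) * (g s * Real.exp (-β * s))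
              = g s * (Real.exp (β * v) * Real.exp (-β * s)) := by ring
            _ ≤ g s * 1 := by nlinarith
            _ = g s := by ring
      have hGv := hGpos v hv.1.le hv.2.le
      rw [hG v] at hGv
      have hΨeq : (∫ s in v..t, (Real.exp (J s) - 1)) = Ψ v := rfl
      rw [hΨeq] at hGv
      have : β * (Real.exp (β * v) * Φ v) ≤ β * Ψ v := by nlinarith
      have hgv : g v = Real.exp (J v) - 1 := rfl
      nlinarith
  -- J strictly mono on [v₀, t]
  have hJmono' : StrictMonoOn J (Set.Icc v₀ t) := by
    apply hJmono.mono
    intro x hx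
    exact ⟨by linarith [hx.1], by linarith [hx.2]⟩
  -- combine
  intro x hx y hy hxy
  have : F x = J x + K x := by rw [hFeq x]; ring
  rw [this]
  have : F y = J y + K y := by rw [hFeq y]; ring
  rw [this]
  have := hJmono' hx hy hxy
  have := hKmono hx hy hxy.le
  linarith
end

section
/- Let u ∈ [0, t], let c > 0, and assume F is monotone nondecreasing on [u, t]. Then ∫_u^t 1_{{F(s) ≤ c}} F(s) e^{−β(s−u)} ds ≥ ∫_u^t 1_{{F(s) ≤ c}} J(s) e^{−β(s−u)} ds − t · 1_{{F(u) ≤ c}} · (J(u) − F(u)), where 1_{{·}} denotes the indicator of the stated condition. -/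
open MeasureTheory Real Set

/-- For `u ∈ [0, t]`, `c > 0`, and `F` monotone nondecreasing on `[u, t]`,
`∫_u^t 1_{F(s) ≤ c} F(s) e^{-β(s-u)} ds
  ≥ ∫_u^t 1_{F(s) ≤ c} J(s) e^{-β(s-u)} ds - t · 1_{F(u) ≤ c} · (J(u) - F(u))`. -/
theorem indicator_F_integral_lower_bound
    (T t α β : ℝ) (hT : 0 < T) (ht : 0 < t) (htT : t ≤ T)
    (hα : 0 < α) (hβ : 0 < β)
    (J : ℝ → ℝ) (hJcont : Continuous J)
    (hJmono : StrictMonoOn J (Set.Icc 0 T)) (hJ0 : J 0 = 0)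
    (F : ℝ → ℝ)
    (hF : ∀ v, F v = J v - α * ∫ s in v..t, (Real.exp (J s) - 1) * Real.exp (-β * (s - v)))
    (u : ℝ) (hu : u ∈ Set.Icc 0 t) (c : ℝ) (hc : 0 < c)
    (hFmono : MonotoneOn F (Set.Icc u t)) :
    (∫ s in u..t, (if F s ≤ c then (1:ℝ) else 0) * J s * Real.exp (-β * (s - u)))
        - t * (if F u ≤ c then (1:ℝ) else 0) * (J u - F u)
      ≤ ∫ s in u..t, (if F s ≤ c then (1:ℝ) else 0) * F s * Real.exp (-β * (s - u)) := by
  obtain ⟨hu0, hut⟩ := hu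
  -- J is nonnegative on [0, T]
  have hJnn : ∀ r, 0 ≤ r → r ≤ T → 0 ≤ J r := by
    intro r hr0 hrT
    rw [← hJ0]
    exact hJmono.monotoneOn ⟨le_refl 0, hT.le⟩ ⟨hr0, hrT⟩ hr0
  -- the base integrand (with base point u)
  set g : ℝ → ℝ := fun r => (Real.exp (J r) - 1) * Real.exp (-β * (r - u)) with hg_def
  have hgcont : Continuous g := by
    apply Continuous.mul
    · exact (Real.continuous_exp.comp hJcont).sub continuous_const
    · exact Real.continuous_exp.comp (continuous_const.mul (continuous_id.sub continuous_const))
  have hgnn : ∀ r, 0 ≤ r → r ≤ T → 0 ≤ g r := by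
    intro r hr0 hrT
    apply mul_nonneg _ (Real.exp_nonneg _)
    have : (1:ℝ) = Real.exp 0 := (Real.exp_zero).symm
    rw [this]
    simpa using Real.exp_le_exp.mpr (hJnn r hr0 hrT)
  -- F is continuous
  have key : ∀ v, (∫ s in v..t, (Real.exp (J s) - 1) * Real.exp (-β * (s - v)))
      = Real.exp (β * v) * ∫ s in v..t, (Real.exp (J s) - 1) * Real.exp (-β * s) := by
    intro v
    rw [← intervalIntegral.integral_const_mul]
    apply intervalIntegral.integral_congr
    intro s _
    simp only
    rw [show Real.exp (-β * (s - v)) = Real.exp (β * v) * Real.exp (-β * s) by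
      rw [← Real.exp_add]; ring_nf]
    ring
  have hFrw : ∀ v, F v = J v
      - α * (Real.exp (β * v) * ∫ s in v..t, (Real.exp (J s) - 1) * Real.exp (-β * s)) := by
    intro v
    rw [hF v, key v]
  have hfcont : Continuous fun s => (Real.exp (J s) - 1) * Real.exp (-β * s) := by
    apply Continuous.mul
    · exact (Real.continuous_exp.comp hJcont).sub continuous_const
    · exact Real.continuous_exp.comp (continuous_const.mul continuous_id)
  have hprim : Continuous fun v => ∫ s in v..t, (Real.exp (J s) - 1) * Real.exp (-β * s) := by
    have h1 : Continuous fun v => ∫ s in t..v, (Real.exp (J s) - 1) * Real.exp (-β * s) :=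
      intervalIntegral.continuous_primitive (fun a b => hfcont.intervalIntegrable a b) t
    have : (fun v => ∫ s in v..t, (Real.exp (J s) - 1) * Real.exp (-β * s))
        = fun v => -∫ s in t..v, (Real.exp (J s) - 1) * Real.exp (-β * s) := by
      funext v; rw [intervalIntegral.integral_symm]
    rw [this]
    exact h1.neg
  have hFcont : Continuous F := by
    have : F = fun v => J v
        - α * (Real.exp (β * v) * ∫ s in v..t, (Real.exp (J s) - 1) * Real.exp (-β * s)) := by
      funext v; exact hFrw v
    rw [this]
    exact hJcont.sub (continuous_const.mul
      ((Real.continuous_exp.comp (continuous_const.mul continuous_id)).mul hprim))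
  have hS : MeasurableSet {x : ℝ | F x ≤ c} :=
    measurableSet_le hFcont.measurable measurable_const
  -- J u - F u as an integral
  have hJFu : J u - F u = α * ∫ r in u..t, g r := by
    rw [hF u]; ring
  have hKnn : 0 ≤ J u - F u := by
    rw [hJFu]
    apply mul_nonneg hα.le
    apply intervalIntegral.integral_nonneg hut
    intro r hr
    exact hgnn r (hu0.trans hr.1) (hr.2.trans htT)
  set K : ℝ := (if F u ≤ c then (1:ℝ) else 0) * (J u - F u) with hK_def
  have hK0 : 0 ≤ K := by
    rw [hK_def]
    split_ifs
    · simpa using hKnn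
    · simp
  -- pointwise bound
  have hpt : ∀ s ∈ Set.Icc u t,
      (if F s ≤ c then (1:ℝ) else 0) * ((J s - F s) * Real.exp (-β * (s - u))) ≤ K := by
    intro s hs
    by_cases h : F s ≤ c
    · have hFu : F u ≤ c :=
        le_trans (hFmono ⟨le_refl u, hut⟩ hs hs.1) h
      rw [if_pos h, hK_def, if_pos hFu, one_mul, one_mul]
      -- (J s - F s) * exp(-β(s-u)) = α * ∫ r in s..t, g r
      have hJFs : (J s - F s) * Real.exp (-β * (s - u)) = α * ∫ r in s..t, g r := by
        rw [hF s]
        have : (J s - (J s - α * ∫ r in s..t,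
            (Real.exp (J r) - 1) * Real.exp (-β * (r - s)))) * Real.exp (-β * (s - u))
            = α * ((∫ r in s..t, (Real.exp (J r) - 1) * Real.exp (-β * (r - s)))
                * Real.exp (-β * (s - u))) := by ring
        rw [this, ← intervalIntegral.integral_mul_const]
        congr 1
        apply intervalIntegral.integral_congr
        intro r _
        rw [hg_def]
        simp only
        rw [mul_assoc, ← Real.exp_add]
        ring_nf
      rw [hJFs, hJFu]
      apply mul_le_mul_of_nonneg_left _ hα.le
      have hsplit : (∫ r in u..s, g r) + (∫ r in s..t, g r) = ∫ r in u..t, g r :=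
        intervalIntegral.integral_add_adjacent_intervals
          (hgcont.intervalIntegrable u s) (hgcont.intervalIntegrable s t)
      have h1 : 0 ≤ ∫ r in u..s, g r := by
        apply intervalIntegral.integral_nonneg hs.1
        intro r hr
        exact hgnn r (hu0.trans hr.1) ((hr.2.trans hs.2).trans htT)
      linarith
    · rw [if_neg h, zero_mul]
      exact hK0
  -- integrability
  have hind_eq : ∀ (φ : ℝ → ℝ), (fun s => (if F s ≤ c then (1:ℝ) else 0) * φ s)
      = Set.indicator {x : ℝ | F x ≤ c} φ := by
    intro φ
    funext s
    simp only [Set.indicator_apply, Set.mem_setOf_eq]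
    split_ifs <;> ring
  have hint : ∀ (φ : ℝ → ℝ), Continuous φ →
      IntervalIntegrable (fun s => (if F s ≤ c then (1:ℝ) else 0) * φ s) volume u t := by
    intro φ hφ
    rw [hind_eq φ]
    constructor
    · exact (hφ.integrableOn_Ioc).indicator hS
    · exact (hφ.integrableOn_Ioc).indicator hS
  have hexpc : Continuous fun s : ℝ => Real.exp (-β * (s - u)) :=
    Real.continuous_exp.comp (continuous_const.mul (continuous_id.sub continuous_const))
  have hintJ : IntervalIntegrable
      (fun s => (if F s ≤ c then (1:ℝ) else 0) * J s * Real.exp (-β * (s - u))) volume u t := by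
    have := hint (fun s => J s * Real.exp (-β * (s - u))) (hJcont.mul hexpc)
    simpa [mul_assoc] using this
  have hintF : IntervalIntegrable
      (fun s => (if F s ≤ c then (1:ℝ) else 0) * F s * Real.exp (-β * (s - u))) volume u t := by
    have := hint (fun s => F s * Real.exp (-β * (s - u))) (hFcont.mul hexpc)
    simpa [mul_assoc] using this
  have hintD : IntervalIntegrable
      (fun s => (if F s ≤ c then (1:ℝ) else 0) * ((J s - F s) * Real.exp (-β * (s - u))))
      volume u t :=
    hint _ (((hJcont.sub hFcont)).mul hexpc)
  -- combine
  have hsub : (∫ s in u..t, (if F s ≤ c then (1:ℝ) else 0) * J s * Real.exp (-β * (s - u)))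
      - (∫ s in u..t, (if F s ≤ c then (1:ℝ) else 0) * F s * Real.exp (-β * (s - u)))
      = ∫ s in u..t,
        (if F s ≤ c then (1:ℝ) else 0) * ((J s - F s) * Real.exp (-β * (s - u))) := by
    rw [← intervalIntegral.integral_sub hintJ hintF]
    apply intervalIntegral.integral_congr
    intro s _
    ring
  have hmono : (∫ s in u..t,
      (if F s ≤ c then (1:ℝ) else 0) * ((J s - F s) * Real.exp (-β * (s - u))))
      ≤ ∫ _ in u..t, K :=
    intervalIntegral.integral_mono_on hut hintD intervalIntegrable_const hpt
  rw [intervalIntegral.integral_const, smul_eq_mul] at hmono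
  have htK : (t - u) * K ≤ t * K := by nlinarith
  have : t * (if F u ≤ c then (1:ℝ) else 0) * (J u - F u) = t * K := by
    rw [hK_def]; ring
  linarith [hsub, hmono, htK, this]
end
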